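/- For any α > 1 there exists m = O(log n / (1 − 1/α)²) such that with high probability, n independent uniform random points in {−1,1}^m, after scaling by a suitable normalization, have all pairwise squared Euclidean distances lying in the interval (1/α, 1). Consequently, the only α-shortcut reachable graph on such a point set is the complete graph. -/

import Mathlib

attribute [local instance] Classical.propDecidable

set_option maxHeartbeats 1000000

/-- The real sign associated to a boolean coin flip: `true ↦ 1`, `false ↦ -1`. -/
def sgn (b : Bool) : ℝ := if b then 1 else -1

/-- Squared Euclidean distance between the `i`-th and `j`-th random sign vectors of an
outcome `ω : Fin n → Fin m → Bool`. -/
def sqDist {n m : ℕ} (ω : Fin n → Fin m → Bool) (i j : Fin n) : ℝ :=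
  ∑ r : Fin m, (sgn (ω i r) - sgn (ω j r)) ^ 2

/-- Scaled distance: Euclidean distance after dividing all points by the normalization
`√(2m(1 + (1 - 1/α)/2))`. -/
noncomputable def scDist {n m : ℕ} (α : ℝ) (ω : Fin n → Fin m → Bool) (i j : Fin n) : ℝ :=
  Real.sqrt (sqDist ω i j) / Real.sqrt (2 * m * (1 + (1 - 1 / α) / 2))

/-- The good event: all pairwise squared distances of the scaled points lie in `(1/α, 1)`. -/
noncomputable def good {n m : ℕ} (α : ℝ) (ω : Fin n → Fin m → Bool) : Prop :=
  ∀ i j : Fin n, i ≠ j →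
    sqDist ω i j / (2 * m * (1 + (1 - 1 / α) / 2)) ∈ Set.Ioo (1 / α) 1

/-- Hamming distance between rows `i` and `j`. -/
def dH {n m : ℕ} (ω : Fin n → Fin m → Bool) (i j : Fin n) : ℕ :=
  (Finset.univ.filter fun r => ¬ (ω i r = ω j r)).card

lemma sqDist_eq {n m : ℕ} (ω : Fin n → Fin m → Bool) (i j : Fin n) :
    sqDist ω i j = 4 * (dH ω i j : ℝ) := by
  unfold sqDist dH
  have h : ∀ r : Fin m, (sgn (ω i r) - sgn (ω j r)) ^ 2
      = if ω i r = ω j r then (0:ℝ) else 4 := by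
    intro r
    cases h1 : ω i r <;> cases h2 : ω j r <;> simp [sgn] <;> norm_num
  rw [Finset.sum_congr rfl fun r _ => h r, Finset.sum_ite, Finset.sum_const_zero,
    Finset.sum_const, zero_add, nsmul_eq_mul]
  rw [mul_comm]

lemma sqDist_nonneg {n m : ℕ} (ω : Fin n → Fin m → Bool) (i j : Fin n) :
    0 ≤ sqDist ω i j :=
  Finset.sum_nonneg fun r _ => sq_nonneg _

lemma sum_pm {n m : ℕ} (ω : Fin n → Fin m → Bool) (i j : Fin n) :
    ∑ r : Fin m, (if ω i r = ω j r then (-1:ℝ) else 1) = 2 * (dH ω i j : ℝ) - m := by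
  rw [Finset.sum_ite, Finset.sum_const, Finset.sum_const]
  have hs := Finset.card_filter_add_card_filter_not
    (s := (Finset.univ : Finset (Fin m))) (p := fun r => ω i r = ω j r)
  simp only [Finset.card_univ, Fintype.card_fin] at hs
  unfold dH
  have h2 : ((Finset.univ.filter fun r => ω i r = ω j r).card : ℝ)
      + ((Finset.univ.filter fun r => ¬ (ω i r = ω j r)).card : ℝ) = m := by
    exact_mod_cast hs
  push_cast [nsmul_eq_mul]
  linarith

lemma card_eq_card_ne {n : ℕ} (i j : Fin n) (hij : i ≠ j) :
    (Finset.univ.filter fun v : Fin n → Bool => v i = v j).card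
      = (Finset.univ.filter fun v : Fin n → Bool => ¬ (v i = v j)).card := by
  apply Finset.card_bij' (fun v _ => Function.update v i (!(v i)))
    (fun v _ => Function.update v i (!(v i)))
  · intro v _
    funext k
    rcases eq_or_ne k i with rfl | hk
    · simp
    · simp [Function.update_of_ne hk]
  · intro v _
    funext k
    rcases eq_or_ne k i with rfl | hk
    · simp
    · simp [Function.update_of_ne hk]
  · intro v hv
    simp only [Finset.mem_filter, Finset.mem_univ, true_and] at hv ⊢
    rw [Function.update_self, Function.update_of_ne (Ne.symm hij)]
    simp [hv]
  · intro v hv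
    simp only [Finset.mem_filter, Finset.mem_univ, true_and] at hv ⊢
    rw [Function.update_self, Function.update_of_ne (Ne.symm hij)]
    cases hvi : v i <;> cases hvj : v j <;> simp_all

lemma coord_sum {n : ℕ} (i j : Fin n) (hij : i ≠ j) (l : ℝ) :
    ∑ v : Fin n → Bool, Real.exp (l * (if v i = v j then (-1:ℝ) else 1))
      = 2 ^ n * Real.cosh l := by
  have h : ∀ v : Fin n → Bool, Real.exp (l * (if v i = v j then (-1:ℝ) else 1))
      = if v i = v j then Real.exp (-l) else Real.exp l := by
    intro v; split <;> simp
  rw [Finset.sum_congr rfl fun v _ => h v, Finset.sum_ite, Finset.sum_const,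
    Finset.sum_const, ← card_eq_card_ne i j hij]
  have hs := Finset.card_filter_add_card_filter_not
    (s := (Finset.univ : Finset (Fin n → Bool))) (p := fun v => v i = v j)
  rw [← card_eq_card_ne i j hij] at hs
  simp only [Finset.card_univ, Fintype.card_fun, Fintype.card_fin, Fintype.card_bool] at hs
  have h2 : ((Finset.univ.filter fun v : Fin n → Bool => v i = v j).card : ℝ)
      + ((Finset.univ.filter fun v : Fin n → Bool => v i = v j).card : ℝ)
      = 2 ^ n := by exact_mod_cast hs
  rw [Real.cosh_eq]
  push_cast [nsmul_eq_mul]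
  linear_combination ((Real.exp (-l) + Real.exp l) / 2) * h2

lemma mgf {n m : ℕ} (i j : Fin n) (hij : i ≠ j) (l : ℝ) :
    ∑ ω : Fin n → Fin m → Bool, Real.exp (l * (2 * (dH ω i j : ℝ) - m))
      = 2 ^ (n * m) * Real.cosh l ^ m := by
  have key : ∀ ω : Fin n → Fin m → Bool,
      Real.exp (l * (2 * (dH ω i j : ℝ) - m))
        = ∏ r : Fin m, Real.exp (l * (if ω i r = ω j r then (-1:ℝ) else 1)) := by
    intro ω
    rw [← Real.exp_sum, ← Finset.mul_sum, sum_pm]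
  rw [Finset.sum_congr rfl fun ω _ => key ω]
  have swap : ∑ ω : Fin n → Fin m → Bool,
        ∏ r : Fin m, Real.exp (l * (if ω i r = ω j r then (-1:ℝ) else 1))
      = ∑ τ : Fin m → Fin n → Bool,
        ∏ r : Fin m, Real.exp (l * (if τ r i = τ r j then (-1:ℝ) else 1)) := by
    apply Fintype.sum_equiv (Equiv.piComm fun (_ : Fin n) (_ : Fin m) => Bool)
    intro ω
    rfl
  rw [swap, ← Fintype.prod_sum fun (_ : Fin m) (v : Fin n → Bool) =>
      Real.exp (l * (if v i = v j then (-1:ℝ) else 1))]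
  rw [Finset.prod_congr rfl fun r _ => coord_sum i j hij l, Finset.prod_const,
    Finset.card_univ, Fintype.card_fin, mul_pow, ← pow_mul]

lemma tail {n m : ℕ} (i j : Fin n) (hij : i ≠ j) (l t : ℝ) :
    ((Finset.univ.filter fun ω : Fin n → Fin m → Bool =>
        t ≤ l * (2 * (dH ω i j : ℝ) - m)).card : ℝ)
      ≤ 2 ^ (n * m) * Real.exp ((m : ℝ) * l ^ 2 / 2 - t) := by
  set S := Finset.univ.filter fun ω : Fin n → Fin m → Bool =>
    t ≤ l * (2 * (dH ω i j : ℝ) - m) with hS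
  have h1 : (S.card : ℝ) * Real.exp t
      ≤ ∑ ω ∈ S, Real.exp (l * (2 * (dH ω i j : ℝ) - m)) := by
    rw [← nsmul_eq_mul]
    apply Finset.card_nsmul_le_sum
    intro ω hω
    rw [hS, Finset.mem_filter] at hω
    exact Real.exp_le_exp.2 hω.2
  have h2 : ∑ ω ∈ S, Real.exp (l * (2 * (dH ω i j : ℝ) - m))
      ≤ ∑ ω : Fin n → Fin m → Bool, Real.exp (l * (2 * (dH ω i j : ℝ) - m)) :=
    Finset.sum_le_sum_of_subset_of_nonneg (Finset.filter_subset _ _)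
      fun _ _ _ => (Real.exp_pos _).le
  have h3 : Real.cosh l ^ m ≤ Real.exp ((m : ℝ) * l ^ 2 / 2) := by
    calc Real.cosh l ^ m ≤ Real.exp (l ^ 2 / 2) ^ m :=
          pow_le_pow_left₀ (Real.cosh_pos l).le (Real.cosh_le_exp_half_sq l) m
      _ = Real.exp ((m : ℝ) * (l ^ 2 / 2)) := (Real.exp_nat_mul _ m).symm
      _ = Real.exp ((m : ℝ) * l ^ 2 / 2) := by ring_nf
  rw [Real.exp_sub, ← mul_div_assoc, le_div_iff₀ (Real.exp_pos t)]
  calc (S.card : ℝ) * Real.exp t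
      ≤ ∑ ω : Fin n → Fin m → Bool, Real.exp (l * (2 * (dH ω i j : ℝ) - m)) :=
        h1.trans h2
    _ = 2 ^ (n * m) * Real.cosh l ^ m := mgf i j hij l
    _ ≤ 2 ^ (n * m) * Real.exp ((m : ℝ) * l ^ 2 / 2) := by
        apply mul_le_mul_of_nonneg_left h3 (by positivity)

/-- For any `α > 1` there is `m = O(log n / (1 - 1/α)²)` such that with
high probability (at least `1 - 1/n^c`), `n` uniform random points of `{-1,1}^m`, after
scaling by `√(2m(1 + (1-1/α)/2))`, have all pairwise squared Euclidean distances in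
`(1/α, 1)`; consequently, on any such outcome, every `α`-shortcut reachable graph on the
scaled points is complete. -/
theorem stmt10 : ∃ C c : ℝ, 0 < C ∧ 0 < c ∧ ∀ α : ℝ, 1 < α → ∀ n : ℕ, 2 ≤ n →
    ∃ m : ℕ, 0 < m ∧ (m : ℝ) ≤ C * Real.log n / (1 - 1 / α) ^ 2 ∧
      ((Finset.univ.filter (fun ω : Fin n → Fin m → Bool => good α ω)).card : ℝ) /
          (Fintype.card (Fin n → Fin m → Bool) : ℝ) ≥ 1 - 1 / (n : ℝ) ^ c ∧
      ∀ ω : Fin n → Fin m → Bool, good α ω →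
        ∀ N : Fin n → Finset (Fin n),
          (∀ i j : Fin n, i ≠ j →
            ∃ z ∈ N i, α * scDist α ω z j < scDist α ω i j) →
          ∀ i j : Fin n, i ≠ j → j ∈ N i := by
  refine ⟨34, 1, by norm_num, by norm_num, ?_⟩
  intro α hα n hn
  have hα0 : (0:ℝ) < α := by linarith
  set ε : ℝ := 1 - 1 / α with hεdef
  have hα1 : 1 / α < 1 := by
    rw [div_lt_one hα0]; exact hα
  have hαinv : 0 < 1 / α := by positivity
  have hε0 : 0 < ε := by simp only [hεdef]; linarith
  have hε1 : ε < 1 := by simp only [hεdef]; linarith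
  have hn0 : (0:ℝ) < n := by positivity
  have hn2 : (2:ℝ) ≤ n := by exact_mod_cast hn
  have hlog2 : Real.log 2 ≤ Real.log n := Real.log_le_log (by norm_num) hn2
  have hlogpos : 0 < Real.log n := by
    have h := Real.log_two_gt_d9
    linarith
  set L : ℝ := Real.log n / ε ^ 2 with hLdef
  have hLpos : 0 < L := by positivity
  have hL1 : Real.log n ≤ L := by
    rw [hLdef, le_div_iff₀ (by positivity)]
    have key : 0 ≤ (1 - ε) * (1 + ε) * Real.log n := by
      apply mul_nonneg (mul_nonneg (by linarith) (by linarith)) hlogpos.le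
    nlinarith [key]
  have hLhalf : 1 ≤ 2 * L := by
    nlinarith [Real.log_two_gt_d9]
  set m : ℕ := ⌈32 * L⌉₊ with hmdef
  have hm0 : 0 < m := Nat.ceil_pos.2 (by positivity)
  have hm0' : (0:ℝ) < m := by exact_mod_cast hm0
  have hmge : 32 * L ≤ (m : ℝ) := Nat.le_ceil _
  have hmle : (m : ℝ) ≤ 34 * Real.log n / ε ^ 2 := by
    have h1 : (m : ℝ) < 32 * L + 1 := Nat.ceil_lt_add_one (by positivity)
    have : 34 * Real.log n / ε ^ 2 = 34 * L := by rw [hLdef]; ring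
    rw [this]
    linarith
  clear_value ε L m
  refine ⟨m, hm0, hmle, ?_, ?_⟩
  · -- probability bound
    set D : ℝ := 2 * (m : ℝ) * (1 + ε / 2) with hDdef
    set P : ℝ := (2:ℝ) ^ (n * m) with hPdef
    set E : ℝ := Real.exp (-((m : ℝ) * ε ^ 2 / 8)) with hEdef
    clear_value D P E
    have hD : 0 < D := by
      rw [hDdef]
      nlinarith [hm0', mul_pos hm0' hε0]
    have hPpos : 0 < P := by rw [hPdef]; positivity
    have hE0 : 0 ≤ E := by rw [hEdef]; positivity
    -- per-pair bound
    have hpair : ∀ i j : Fin n, i ≠ j →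
        ((Finset.univ.filter fun ω : Fin n → Fin m → Bool =>
          ¬ (sqDist ω i j / D ∈ Set.Ioo (1/α) 1)).card : ℝ) ≤ 2 * (P * E) := by
      intro i j hij
      have hsub : (Finset.univ.filter fun ω : Fin n → Fin m → Bool =>
            ¬ (sqDist ω i j / D ∈ Set.Ioo (1/α) 1))
          ⊆ (Finset.univ.filter fun ω : Fin n → Fin m → Bool =>
              (m : ℝ) * ε ^ 2 / 4 ≤ (ε/2) * (2 * (dH ω i j : ℝ) - m))
            ∪ (Finset.univ.filter fun ω : Fin n → Fin m → Bool =>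
              (m : ℝ) * ε ^ 2 / 4 ≤ (-(ε/2)) * (2 * (dH ω i j : ℝ) - m)) := by
        intro ω hω
        simp only [Finset.mem_filter, Finset.mem_univ, true_and, Set.mem_Ioo,
          Finset.mem_union] at hω ⊢
        push_neg at hω
        have hsd := sqDist_eq ω i j
        by_cases hq : 1 / α < sqDist ω i j / D
        · -- upper tail
          have h1 : (1:ℝ) ≤ sqDist ω i j / D := hω hq
          rw [le_div_iff₀ hD] at h1
          left
          rw [hsd, hDdef] at h1
          nlinarith
        · -- lower tail
          push_neg at hq
          rw [div_le_iff₀ hD] at hq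
          right
          have h1α : 1 / α = 1 - ε := by rw [hεdef]; ring
          rw [hsd, hDdef, h1α] at hq
          nlinarith [mul_le_mul_of_nonneg_left hq hε0.le,
            mul_pos hm0' (mul_pos hε0 (mul_pos hε0 hε0))]
      have hre : (m : ℝ) * (ε/2) ^ 2 / 2 - (m : ℝ) * ε ^ 2 / 4
          = -((m : ℝ) * ε ^ 2 / 8) := by ring
      have ht1 := tail (m := m) i j hij (ε/2) ((m : ℝ) * ε ^ 2 / 4)
      have ht2 := tail (m := m) i j hij (-(ε/2)) ((m : ℝ) * ε ^ 2 / 4)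
      rw [hre] at ht1
      have hre2 : (m : ℝ) * (-(ε/2)) ^ 2 / 2 - (m : ℝ) * ε ^ 2 / 4
          = -((m : ℝ) * ε ^ 2 / 8) := by ring
      rw [hre2] at ht2
      calc ((Finset.univ.filter fun ω : Fin n → Fin m → Bool =>
            ¬ (sqDist ω i j / D ∈ Set.Ioo (1/α) 1)).card : ℝ)
          ≤ (((Finset.univ.filter fun ω : Fin n → Fin m → Bool =>
              (m : ℝ) * ε ^ 2 / 4 ≤ (ε/2) * (2 * (dH ω i j : ℝ) - m))
            ∪ (Finset.univ.filter fun ω : Fin n → Fin m → Bool =>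
              (m : ℝ) * ε ^ 2 / 4 ≤ (-(ε/2)) * (2 * (dH ω i j : ℝ) - m))).card : ℝ) := by
            exact_mod_cast Finset.card_le_card hsub
        _ ≤ ((Finset.univ.filter fun ω : Fin n → Fin m → Bool =>
              (m : ℝ) * ε ^ 2 / 4 ≤ (ε/2) * (2 * (dH ω i j : ℝ) - m)).card : ℝ)
            + ((Finset.univ.filter fun ω : Fin n → Fin m → Bool =>
              (m : ℝ) * ε ^ 2 / 4 ≤ (-(ε/2)) * (2 * (dH ω i j : ℝ) - m)).card : ℝ) := by
            exact_mod_cast Finset.card_union_le _ _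
        _ ≤ P * E + P * E := by
            rw [hPdef, hEdef]; exact add_le_add ht1 ht2
        _ = 2 * (P * E) := by ring
    -- total bad bound
    have hbad : ((Finset.univ.filter fun ω : Fin n → Fin m → Bool =>
        ¬ good α ω).card : ℝ) ≤ (n:ℝ)^2 * (2 * (P * E)) := by
      have hsub : (Finset.univ.filter fun ω : Fin n → Fin m → Bool => ¬ good α ω)
          ⊆ (Finset.univ : Finset (Fin n)).offDiag.biUnion fun p =>
              Finset.univ.filter fun ω : Fin n → Fin m → Bool =>
                ¬ (sqDist ω p.1 p.2 / D ∈ Set.Ioo (1/α) 1) := by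
        intro ω hω
        simp only [Finset.mem_filter, Finset.mem_univ, true_and] at hω
        rw [good] at hω
        push_neg at hω
        obtain ⟨i, j, hij, hcon⟩ := hω
        rw [Finset.mem_biUnion]
        refine ⟨(i, j), Finset.mem_offDiag.2 ⟨Finset.mem_univ _, Finset.mem_univ _, hij⟩, ?_⟩
        simp only [Finset.mem_filter, Finset.mem_univ, true_and]
        rw [hDdef, hεdef]
        exact hcon
      have h1 : ((Finset.univ.filter fun ω : Fin n → Fin m → Bool =>
          ¬ good α ω).card : ℕ)
          ≤ ∑ p ∈ (Finset.univ : Finset (Fin n)).offDiag,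
              (Finset.univ.filter fun ω : Fin n → Fin m → Bool =>
                ¬ (sqDist ω p.1 p.2 / D ∈ Set.Ioo (1/α) 1)).card :=
        le_trans (Finset.card_le_card hsub) Finset.card_biUnion_le
      have h2 : (∑ p ∈ (Finset.univ : Finset (Fin n)).offDiag,
            ((Finset.univ.filter fun ω : Fin n → Fin m → Bool =>
              ¬ (sqDist ω p.1 p.2 / D ∈ Set.Ioo (1/α) 1)).card : ℝ))
          ≤ ∑ _p ∈ (Finset.univ : Finset (Fin n)).offDiag, 2 * (P * E) := by
        apply Finset.sum_le_sum
        intro p hp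
        exact hpair p.1 p.2 (Finset.mem_offDiag.1 hp).2.2
      have h3 : ((Finset.univ : Finset (Fin n)).offDiag.card : ℝ) ≤ (n:ℝ)^2 := by
        have hno : (Finset.univ : Finset (Fin n)).offDiag.card ≤ n * n := by
          rw [Finset.offDiag_card, Finset.card_univ, Fintype.card_fin]
          omega
        calc ((Finset.univ : Finset (Fin n)).offDiag.card : ℝ) ≤ ((n * n : ℕ) : ℝ) := by
              exact_mod_cast hno
          _ = (n:ℝ)^2 := by push_cast; ring
      calc ((Finset.univ.filter fun ω : Fin n → Fin m → Bool =>
            ¬ good α ω).card : ℝ)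
          ≤ ∑ p ∈ (Finset.univ : Finset (Fin n)).offDiag,
              ((Finset.univ.filter fun ω : Fin n → Fin m → Bool =>
                ¬ (sqDist ω p.1 p.2 / D ∈ Set.Ioo (1/α) 1)).card : ℝ) := by
            exact_mod_cast h1
        _ ≤ ∑ _p ∈ (Finset.univ : Finset (Fin n)).offDiag, 2 * (P * E) := h2
        _ = ((Finset.univ : Finset (Fin n)).offDiag.card : ℝ) * (2 * (P * E)) := by
            rw [Finset.sum_const, nsmul_eq_mul]
        _ ≤ (n:ℝ)^2 * (2 * (P * E)) := by
            apply mul_le_mul_of_nonneg_right h3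
              (mul_nonneg (by norm_num) (mul_nonneg hPpos.le hE0))
    -- numeric bound
    have hEle : E ≤ (1 / (n:ℝ)) ^ 4 := by
      have h1 : 32 * Real.log n ≤ (m:ℝ) * ε ^ 2 := by
        have := mul_le_mul_of_nonneg_right hmge (pow_pos hε0 2).le
        rw [hLdef] at this
        calc 32 * Real.log n = 32 * (Real.log n / ε ^ 2) * ε ^ 2 := by
              field_simp
          _ ≤ (m:ℝ) * ε ^ 2 := this
      have h2 : E ≤ Real.exp (-(4 * Real.log n)) := by
        rw [hEdef]
        apply Real.exp_le_exp.2
        linarith [h1]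
      have h3 : Real.exp (-(4 * Real.log n)) = (1 / (n:ℝ)) ^ 4 := by
        rw [show -(4 * Real.log n) = (4:ℕ) * (-Real.log n) by push_cast; ring,
          Real.exp_nat_mul, Real.exp_neg, Real.exp_log hn0]
        norm_num
      linarith
    have hfinal : ((Finset.univ.filter fun ω : Fin n → Fin m → Bool =>
        ¬ good α ω).card : ℝ) ≤ P / n := by
      calc ((Finset.univ.filter fun ω : Fin n → Fin m → Bool =>
            ¬ good α ω).card : ℝ) ≤ (n:ℝ)^2 * (2 * (P * E)) := hbad
        _ ≤ (n:ℝ)^2 * (2 * (P * (1/(n:ℝ))^4)) := by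
            apply mul_le_mul_of_nonneg_left _ (by positivity)
            apply mul_le_mul_of_nonneg_left _ (by norm_num)
            exact mul_le_mul_of_nonneg_left hEle hPpos.le
        _ = 2 * P / (n:ℝ)^2 := by field_simp
        _ ≤ P / n := by
            rw [div_le_div_iff₀ (by positivity) hn0]
            nlinarith [mul_nonneg hPpos.le (mul_nonneg (sub_nonneg.2 hn2) hn0.le)]
    -- assemble
    have hTn : (Fintype.card (Fin n → Fin m → Bool)) = 2 ^ (n * m) := by
      simp only [Fintype.card_fun, Fintype.card_fin, Fintype.card_bool]
      rw [← pow_mul, Nat.mul_comm]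
    have hsplit := Finset.card_filter_add_card_filter_not
      (s := (Finset.univ : Finset (Fin n → Fin m → Bool)))
      (p := fun ω => good α ω)
    rw [Finset.card_univ, hTn] at hsplit
    have hsplit' : ((Finset.univ.filter fun ω : Fin n → Fin m → Bool =>
          good α ω).card : ℝ)
        + ((Finset.univ.filter fun ω : Fin n → Fin m → Bool =>
          ¬ good α ω).card : ℝ) = P := by
      rw [hPdef]; exact_mod_cast hsplit
    rw [ge_iff_le, Real.rpow_one, hTn]
    have hcast : ((2 ^ (n * m) : ℕ) : ℝ) = P := by rw [hPdef]; push_cast; ring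
    rw [hcast, le_div_iff₀ hPpos]
    have hPn : (1 - 1 / (n:ℝ)) * P = P - P / n := by field_simp
    rw [hPn]
    linarith [hfinal, hsplit']
  · -- completeness
    intro ω hgood N hN i j hij
    obtain ⟨z, hzN, hz⟩ := hN i j hij
    set D : ℝ := 2 * (m : ℝ) * (1 + ε / 2) with hDdef
    clear_value D
    have hD : 0 < D := by
      have h12 : (0:ℝ) < 1 + ε / 2 := by linarith
      rw [hDdef]
      exact mul_pos (mul_pos two_pos hm0') h12
    have hDre : 2 * (m : ℝ) * (1 + (1 - 1/α) / 2) = D := by rw [hDdef, hεdef]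
    have hsc : ∀ a b : Fin n, scDist α ω a b = Real.sqrt (sqDist ω a b / D) := by
      intro a b
      simp only [scDist]
      rw [Real.sqrt_div (sqDist_nonneg ω a b), hDdef, hεdef]
    suffices hzj : z = j by rw [← hzj]; exact hzN
    by_contra hzj
    have hij' := hgood i j hij
    have hzj' := hgood z j hzj
    rw [hDre] at hij' hzj'
    rw [Set.mem_Ioo] at hij' hzj'
    have h1 : scDist α ω i j < 1 := by
      rw [hsc]
      calc Real.sqrt (sqDist ω i j / D) < Real.sqrt 1 :=
            Real.sqrt_lt_sqrt (div_nonneg (sqDist_nonneg ω i j) hD.le) hij'.2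
        _ = 1 := Real.sqrt_one
    have h2 : Real.sqrt (1/α) < scDist α ω z j := by
      rw [hsc]
      exact Real.sqrt_lt_sqrt hαinv.le hzj'.1
    have hsqα : Real.sqrt α * Real.sqrt α = α := Real.mul_self_sqrt hα0.le
    have hsqα0 : 0 < Real.sqrt α := Real.sqrt_pos.2 hα0
    have h3 : α * Real.sqrt (1/α) = Real.sqrt α := by
      rw [one_div, Real.sqrt_inv]
      field_simp
      rw [sq, hsqα]
    have h4 : (1:ℝ) < Real.sqrt α := by
      rw [show (1:ℝ) = Real.sqrt 1 from Real.sqrt_one.symm]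
      exact Real.sqrt_lt_sqrt (by norm_num) hα
    have h5 : Real.sqrt α < α * scDist α ω z j := by
      rw [← h3]
      exact mul_lt_mul_of_pos_left h2 hα0
    linarith
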